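/- Let ν > 0, let ω : [-1/2,1/2] → ℝ be continuous, and let Z ∈ ℂ with Re Z > 0. Set Θ̃(Z) := 1/(1 + ν ∫_{-1/2}^{1/2} Z/(Z² + ω(k)²) dk). Then Re( 1 + ν ∫_{-1/2}^{1/2} Z/(Z² + ω(k)²) dk ) > 1, the denominator is nonzero, and |Θ̃(Z)| < 1. -/

import Mathlib

open MeasureTheory intervalIntegral

lemma denom_ne_zero_aux (Z : ℂ) (hZ : 0 < Z.re) (c : ℝ) : Z ^ 2 + (c : ℂ) ^ 2 ≠ 0 := by
  intro h
  have hre : (Z ^ 2 + (c : ℂ) ^ 2).re = 0 := by rw [h]; simp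
  have him : (Z ^ 2 + (c : ℂ) ^ 2).im = 0 := by rw [h]; simp
  simp only [Complex.add_re, Complex.add_im, pow_two, Complex.mul_re, Complex.mul_im,
    Complex.ofReal_re, Complex.ofReal_im] at hre him
  have h2 : Z.im * (2 * Z.re) = 0 := by linarith
  rcases mul_eq_zero.mp h2 with h3 | h3
  · rw [h3] at hre; nlinarith
  · nlinarith

lemma re_pos_aux (Z : ℂ) (hZ : 0 < Z.re) (c : ℝ) : 0 < (Z / (Z ^ 2 + (c : ℂ) ^ 2)).re := by
  have hne := denom_ne_zero_aux Z hZ c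
  have hns : 0 < Complex.normSq (Z ^ 2 + (c : ℂ) ^ 2) := Complex.normSq_pos.mpr hne
  rw [Complex.div_re, ← add_div]
  apply div_pos _ hns
  simp only [Complex.add_re, Complex.add_im, pow_two, Complex.mul_re, Complex.mul_im,
    Complex.ofReal_re, Complex.ofReal_im]
  nlinarith [mul_pos (mul_pos hZ hZ) hZ, mul_nonneg hZ.le (mul_self_nonneg Z.im), mul_nonneg hZ.le (mul_self_nonneg c)]

theorem theta_multiplier_bounded (ν : ℝ) (hν : 0 < ν) (ω : ℝ → ℝ)
    (hω : ContinuousOn ω (Set.Icc (-(1/2) : ℝ) (1/2))) (Z : ℂ) (hZ : 0 < Z.re) :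
    1 < ((1 : ℂ) + (ν : ℂ) * ∫ k in (-(1/2) : ℝ)..(1/2), Z / (Z ^ 2 + ((ω k : ℂ)) ^ 2)).re ∧
    (1 : ℂ) + (ν : ℂ) * (∫ k in (-(1/2) : ℝ)..(1/2), Z / (Z ^ 2 + ((ω k : ℂ)) ^ 2)) ≠ 0 ∧
    ‖(1 / ((1 : ℂ) + (ν : ℂ) *
      ∫ k in (-(1/2) : ℝ)..(1/2), Z / (Z ^ 2 + ((ω k : ℂ)) ^ 2)))‖ < 1 := by
  set f : ℝ → ℂ := fun k => Z / (Z ^ 2 + ((ω k : ℂ)) ^ 2) with hf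
  have hab : (-(1/2) : ℝ) ≤ 1/2 := by norm_num
  have hcont : ContinuousOn f (Set.Icc (-(1/2) : ℝ) (1/2)) := by
    apply ContinuousOn.div continuousOn_const
    · exact continuousOn_const.add (((Complex.continuous_ofReal.comp_continuousOn hω)).pow 2)
    · intro k hk
      exact denom_ne_zero_aux Z hZ (ω k)
  have hint : IntervalIntegrable f volume (-(1/2) : ℝ) (1/2) := by
    apply ContinuousOn.intervalIntegrable
    rwa [Set.uIcc_of_le hab]
  have hIre : (∫ k in (-(1/2) : ℝ)..(1/2), f k).re
      = ∫ k in (-(1/2) : ℝ)..(1/2), (f k).re := by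
    rw [intervalIntegral.integral_of_le hab, intervalIntegral.integral_of_le hab]
    exact (integral_re hint.1).symm
  have hintre : IntervalIntegrable (fun k => (f k).re) volume (-(1/2) : ℝ) (1/2) := by
    apply ContinuousOn.intervalIntegrable
    rw [Set.uIcc_of_le hab]
    exact Complex.continuous_re.comp_continuousOn hcont
  have hpos : 0 < ∫ k in (-(1/2) : ℝ)..(1/2), (f k).re := by
    apply intervalIntegral_pos_of_pos_on hintre
    · intro x _
      exact re_pos_aux Z hZ (ω x)
    · norm_num
  have h1 : 1 < ((1 : ℂ) + (ν : ℂ) * ∫ k in (-(1/2) : ℝ)..(1/2), f k).re := by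
    simp only [Complex.add_re, Complex.one_re, Complex.mul_re, Complex.ofReal_re,
      Complex.ofReal_im, zero_mul, sub_zero, hIre]
    nlinarith
  refine ⟨h1, ?_, ?_⟩
  · intro h
    rw [h] at h1
    simp only [Complex.zero_re] at h1
    linarith
  · rw [norm_div, norm_one]
    rw [div_lt_one (by
      have := Complex.re_le_norm ((1 : ℂ) + (ν : ℂ) * ∫ k in (-(1/2) : ℝ)..(1/2), f k)
      linarith)]
    calc (1:ℝ) < _ := h1
    _ ≤ _ := Complex.re_le_norm _
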